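/- The second deformed Bessel function 𝒥_n^μ satisfies the recursion (x D_μ − [−n]_μ) 𝒥_n^μ(x) = x 𝒥_{n−1}^μ(x) for n ≥ 1. -/

import Mathlib

/-- The Dunkl operator `D_μ f(x) = f'(x) + μ (f(x) - f(-x))/x`. -/
noncomputable def dunkl (μ : ℝ) (f : ℝ → ℝ) (x : ℝ) : ℝ :=
  deriv f x + μ * (f x - f (-x)) / x

/-- The deformed integer `[n]_μ = n + μ (1 - (-1)^n)`. -/
noncomputable def dIdx (μ : ℝ) (n : ℕ) : ℝ := n + μ * (1 - (-1 : ℝ) ^ n)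

/-- The deformed factorial `[n]_μ!`. -/
noncomputable def dFact (μ : ℝ) : ℕ → ℝ
  | 0 => 1
  | n + 1 => dIdx μ (n + 1) * dFact μ n

/-- The second deformed Bessel function `𝒥_n^μ`. -/
noncomputable def J2mu (μ : ℝ) (n : ℕ) (x : ℝ) : ℝ :=
  ∑' k : ℕ, (-1 : ℝ) ^ k * (Nat.factorial (2 * k)) /
      ((Nat.factorial k) * (Nat.factorial (k + n)) * dFact μ (2 * k)) *
    (x / 2) ^ (2 * k + n)

open Nat

lemma le_dIdx (μ : ℝ) (hμ : 0 ≤ μ) (m : ℕ) : (m : ℝ) ≤ dIdx μ m := by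
  unfold dIdx
  rcases neg_one_pow_eq_or ℝ m with h | h <;> rw [h] <;> nlinarith

lemma fact_le_dFact (μ : ℝ) (hμ : 0 ≤ μ) (m : ℕ) :
    (Nat.factorial m : ℝ) ≤ dFact μ m := by
  induction m with
  | zero => simp [dFact]
  | succ m ih =>
    have h1 : ((m + 1 : ℕ) : ℝ) ≤ dIdx μ (m + 1) := le_dIdx μ hμ (m + 1)
    have h2 : (0 : ℝ) < m ! := by exact_mod_cast Nat.factorial_pos m
    calc ((m + 1)! : ℝ) = ((m : ℝ) + 1) * m ! := by push_cast [Nat.factorial_succ]; ring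
    _ ≤ dIdx μ (m + 1) * dFact μ m := by
        apply mul_le_mul (by push_cast at h1 ⊢; linarith) ih h2.le
          (le_trans (by positivity) h1)
    _ = dFact μ (m + 1) := rfl

lemma dFact_pos (μ : ℝ) (hμ : 0 ≤ μ) (m : ℕ) : 0 < dFact μ m :=
  lt_of_lt_of_le (by exact_mod_cast Nat.factorial_pos m) (fact_le_dFact μ hμ m)

/-- the coefficient of the Bessel series -/
noncomputable def cJ (μ : ℝ) (n k : ℕ) : ℝ :=
  (-1 : ℝ) ^ k * (Nat.factorial (2 * k)) /
      ((Nat.factorial k) * (Nat.factorial (k + n)) * dFact μ (2 * k))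

lemma J2mu_eq (μ : ℝ) (n : ℕ) :
    J2mu μ n = fun x => ∑' k : ℕ, cJ μ n k * (x / 2) ^ (2 * k + n) := rfl

lemma abs_cJ_le (μ : ℝ) (hμ : 0 ≤ μ) (n k : ℕ) : |cJ μ n k| ≤ 1 / k ! := by
  have hd : ((2 * k)! : ℝ) ≤ dFact μ (2 * k) := fact_le_dFact μ hμ _
  have hdpos : (0 : ℝ) < dFact μ (2 * k) := dFact_pos μ hμ _
  have hk : (0 : ℝ) < k ! := by exact_mod_cast Nat.factorial_pos k
  have hkn : (1 : ℝ) ≤ (k + n)! := by exact_mod_cast Nat.one_le_iff_ne_zero.mpr (Nat.factorial_pos (k + n)).ne'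
  have h2k : (0 : ℝ) < (2 * k)! := by exact_mod_cast Nat.factorial_pos (2 * k)
  unfold cJ
  rw [abs_div, abs_mul, abs_pow, abs_neg, abs_one, one_pow, one_mul, Nat.abs_cast,
    abs_of_pos (by positivity)]
  rw [div_le_div_iff₀ (by positivity) hk]
  calc ((2 * k)! : ℝ) * k ! ≤ dFact μ (2 * k) * k ! := by
        exact mul_le_mul_of_nonneg_right hd hk.le
    _ ≤ (dFact μ (2 * k) * k !) * (k + n)! := le_mul_of_one_le_right (by positivity) hkn
    _ = 1 * ((k !) * ((k + n)!) * dFact μ (2 * k)) := by ring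

lemma summable_u (C A : ℝ) : Summable (fun k : ℕ => C * A ^ k / k !) := by
  simpa [mul_div_assoc] using (Real.summable_pow_div_factorial A).mul_left C

lemma norm_deriv_term_le (μ : ℝ) (hμ : 0 ≤ μ) (m k : ℕ) (r y : ℝ) (hy : |y| ≤ r) :
    ‖cJ μ (m + 1) k * (((2 * k + (m + 1) : ℕ) : ℝ) * (y / 2) ^ (2 * k + m) * (1 / 2))‖ ≤
      (2 ^ (m + 1) * r ^ m) * (4 * r ^ 2) ^ k / k ! := by
  have hr0 : 0 ≤ r := le_trans (abs_nonneg y) hy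
  have hy2 : |y / 2| ≤ r := by
    rw [abs_div, abs_two]; linarith [abs_nonneg y]
  have hpow : ((2 * k + (m + 1) : ℕ) : ℝ) ≤ 2 ^ (2 * k + (m + 1)) := by
    exact_mod_cast (Nat.lt_two_pow_self (n := 2 * k + (m + 1))).le
  have hk : (0 : ℝ) < k ! := by exact_mod_cast Nat.factorial_pos k
  calc ‖cJ μ (m + 1) k * (((2 * k + (m + 1) : ℕ) : ℝ) * (y / 2) ^ (2 * k + m) * (1 / 2))‖
      = |cJ μ (m + 1) k| * (((2 * k + (m + 1) : ℕ) : ℝ) * |y / 2| ^ (2 * k + m) * (1 / 2)) := by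
        rw [Real.norm_eq_abs, abs_mul, abs_mul, abs_mul, abs_pow, Nat.abs_cast]
        norm_num
    _ ≤ (1 / k !) * ((2 : ℝ) ^ (2 * k + (m + 1)) * r ^ (2 * k + m) * 1) := by
        gcongr <;> first
          | exact abs_cJ_le μ hμ _ _
          | exact hpow
          | exact hy2
          | positivity
          | norm_num
    _ = (2 ^ (m + 1) * r ^ m) * (4 * r ^ 2) ^ k / k ! := by
        have e1 : (4 * r ^ 2 : ℝ) ^ k = 2 ^ (2 * k) * r ^ (2 * k) := by
          rw [mul_pow, show (4 : ℝ) = 2 ^ 2 by norm_num, ← pow_mul, ← pow_mul]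
        have e2 : (2 : ℝ) ^ (2 * k + (m + 1)) = 2 ^ (2 * k) * 2 ^ (m + 1) := pow_add 2 _ _
        have e3 : (r : ℝ) ^ (2 * k + m) = r ^ (2 * k) * r ^ m := pow_add r _ _
        rw [e1, e2, e3]; field_simp

lemma summable_J2mu_term (μ : ℝ) (hμ : 0 ≤ μ) (n : ℕ) (x : ℝ) :
    Summable (fun k : ℕ => cJ μ n k * (x / 2) ^ (2 * k + n)) := by
  apply Summable.of_norm_bounded (g := fun k : ℕ => (|x / 2| ^ n) * ((x / 2) ^ 2) ^ k / k !)
    (summable_u _ _)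
  intro k
  have hk : (0 : ℝ) < k ! := by exact_mod_cast Nat.factorial_pos k
  calc ‖cJ μ n k * (x / 2) ^ (2 * k + n)‖ = |cJ μ n k| * |x / 2| ^ (2 * k + n) := by
        rw [Real.norm_eq_abs, abs_mul, abs_pow]
    _ ≤ (1 / k !) * |x / 2| ^ (2 * k + n) := by
        gcongr; exact abs_cJ_le μ hμ _ _
    _ = (|x / 2| ^ n) * ((x / 2) ^ 2) ^ k / k ! := by
        rw [pow_add, pow_mul, sq_abs]; field_simp

lemma hasDerivAt_J2mu (μ : ℝ) (hμ : 0 ≤ μ) (m : ℕ) (x : ℝ) :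
    HasDerivAt (J2mu μ (m + 1))
      (∑' k : ℕ, cJ μ (m + 1) k *
        (((2 * k + (m + 1) : ℕ) : ℝ) * (x / 2) ^ (2 * k + m) * (1 / 2))) x := by
  set r : ℝ := |x| + 1 with hr
  have hr0 : (0 : ℝ) < r := by positivity
  rw [J2mu_eq]
  apply hasDerivAt_tsum_of_isPreconnected
    (summable_u (2 ^ (m + 1) * r ^ m) (4 * r ^ 2)) Metric.isOpen_ball
    ((convex_ball (0 : ℝ) r).isPreconnected)
    (g' := fun k y => cJ μ (m + 1) k *
      (((2 * k + (m + 1) : ℕ) : ℝ) * (y / 2) ^ (2 * k + m) * (1 / 2)))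
    (y₀ := 0)
  · intro k y _
    have h := (((hasDerivAt_id y).div_const 2).pow (2 * k + (m + 1))).const_mul
      (cJ μ (m + 1) k)
    have he : 2 * k + (m + 1) - 1 = 2 * k + m := by omega
    rw [he] at h
    exact h
  · intro k y hy
    have : |y| ≤ r := le_of_lt (by simpa [Real.norm_eq_abs] using Metric.mem_ball.mp hy)
    exact norm_deriv_term_le μ hμ m k r y this
  · exact Metric.mem_ball_self hr0
  · have : (fun k : ℕ => cJ μ (m + 1) k * ((0 : ℝ) / 2) ^ (2 * k + (m + 1))) =
        fun _ => (0 : ℝ) := by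
      funext k
      simp [zero_pow (show 2 * k + (m + 1) ≠ 0 by omega)]
    rw [this]; exact summable_zero
  · rw [Metric.mem_ball]
    simp [Real.dist_eq, hr]

lemma summable_deriv_term (μ : ℝ) (hμ : 0 ≤ μ) (m : ℕ) (x : ℝ) :
    Summable (fun k : ℕ => cJ μ (m + 1) k *
      (((2 * k + (m + 1) : ℕ) : ℝ) * (x / 2) ^ (2 * k + m) * (1 / 2))) :=
  Summable.of_norm_bounded (summable_u (2 ^ (m + 1) * |x| ^ m) (4 * |x| ^ 2))
    (fun k => norm_deriv_term_le μ hμ m k |x| x le_rfl)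

lemma J2mu_neg (μ : ℝ) (n : ℕ) (x : ℝ) :
    J2mu μ n (-x) = (-1 : ℝ) ^ n * J2mu μ n x := by
  rw [J2mu_eq]
  have h : ∀ k : ℕ, cJ μ n k * (-x / 2) ^ (2 * k + n) =
      (-1 : ℝ) ^ n * (cJ μ n k * (x / 2) ^ (2 * k + n)) := by
    intro k
    have h1 : (-x / 2 : ℝ) = -(x / 2) := by ring
    have h2 : (-1 : ℝ) ^ (2 * k + n) = (-1 : ℝ) ^ n := by
      rw [pow_add, pow_mul]; norm_num
    rw [h1, neg_pow, h2]; ring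
  simp only [h]
  rw [tsum_mul_left]

/-- The recursion `(x D_μ - [-n]_μ) 𝒥_n^μ(x) = x 𝒥_{n-1}^μ(x)` for `n ≥ 1`. -/
theorem J2mu_recursion (μ : ℝ) (hμ : 0 ≤ μ) (n : ℕ) (hn : 1 ≤ n) (x : ℝ) (hx : x ≠ 0) :
    x * dunkl μ (J2mu μ n) x - ((-(n : ℝ)) + μ * (1 - (-1 : ℝ) ^ n)) * J2mu μ n x =
      x * J2mu μ (n - 1) x := by

  obtain ⟨m, rfl⟩ : ∃ m, n = m + 1 := ⟨n - 1, by omega⟩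
  have hD := hasDerivAt_J2mu μ hμ m x
  have hderiv : deriv (J2mu μ (m + 1)) x = ∑' k : ℕ, cJ μ (m + 1) k *
      (((2 * k + (m + 1) : ℕ) : ℝ) * (x / 2) ^ (2 * k + m) * (1 / 2)) := hD.deriv
  set D : ℝ := ∑' k : ℕ, cJ μ (m + 1) k *
      (((2 * k + (m + 1) : ℕ) : ℝ) * (x / 2) ^ (2 * k + m) * (1 / 2)) with hDdef
  set Jx : ℝ := J2mu μ (m + 1) x with hJdef
  rw [dunkl, hderiv, J2mu_neg]
  have hcast : ((m + 1 : ℕ) : ℝ) = (m : ℝ) + 1 := by push_cast; ring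
  have step1 : x * (D + μ * (Jx - (-1 : ℝ) ^ (m + 1) * Jx) / x) -
      ((-((m + 1 : ℕ) : ℝ)) + μ * (1 - (-1 : ℝ) ^ (m + 1))) * Jx =
      x * D + ((m : ℝ) + 1) * Jx := by
    rw [hcast]
    field_simp
    ring
  rw [step1]
  -- now show x * D + (m+1) * Jx = x * J2mu μ m x
  have hsum1 : Summable (fun k : ℕ => x * (cJ μ (m + 1) k *
      (((2 * k + (m + 1) : ℕ) : ℝ) * (x / 2) ^ (2 * k + m) * (1 / 2)))) :=
    (summable_deriv_term μ hμ m x).mul_left x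
  have hsum2 : Summable (fun k : ℕ => ((m : ℝ) + 1) *
      (cJ μ (m + 1) k * (x / 2) ^ (2 * k + (m + 1)))) :=
    (summable_J2mu_term μ hμ (m + 1) x).mul_left _
  have hxD : x * D = ∑' k : ℕ, x * (cJ μ (m + 1) k *
      (((2 * k + (m + 1) : ℕ) : ℝ) * (x / 2) ^ (2 * k + m) * (1 / 2))) :=
    (tsum_mul_left).symm
  have hmJ : ((m : ℝ) + 1) * Jx = ∑' k : ℕ, ((m : ℝ) + 1) *
      (cJ μ (m + 1) k * (x / 2) ^ (2 * k + (m + 1))) := by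
    rw [hJdef, J2mu_eq]; exact (tsum_mul_left).symm
  have hRHS : x * J2mu μ (m + 1 - 1) x =
      ∑' k : ℕ, x * (cJ μ m k * (x / 2) ^ (2 * k + m)) := by
    rw [show m + 1 - 1 = m from rfl, J2mu_eq]; exact (tsum_mul_left).symm
  rw [hxD, hmJ, hRHS, ← Summable.tsum_add hsum1 hsum2]
  apply tsum_congr
  intro k
  -- termwise identity
  have hfpos : (0 : ℝ) < k ! := by exact_mod_cast Nat.factorial_pos k
  have hfpos2 : (0 : ℝ) < (k + m)! := by exact_mod_cast Nat.factorial_pos (k + m)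
  have hdpos : (0 : ℝ) < dFact μ (2 * k) := dFact_pos μ hμ _
  have hfs : ((k + (m + 1))! : ℝ) = ((k : ℝ) + m + 1) * (k + m)! := by
    rw [show k + (m + 1) = (k + m) + 1 from rfl, Nat.factorial_succ]
    push_cast; ring
  have hpows : (x / 2 : ℝ) ^ (2 * k + (m + 1)) = (x / 2) ^ (2 * k + m) * (x / 2) := by
    rw [show 2 * k + (m + 1) = (2 * k + m) + 1 from rfl, pow_succ]
  rw [hpows]
  unfold cJ
  rw [hfs]
  push_cast
  have hkm1 : ((k : ℝ) + m + 1) ≠ 0 := by positivity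
  field_simp
  ring
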